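/- Let (π, π̃) be an α-coupled policy pair, meaning there is a joint distribution over action pairs (a, ã) at each state whose marginals are π and π̃ and with P(a ≠ ã | s) ≤ α for all s. Let Ā(s) = E_{a∼π̃(·|s)}[A_π(s,a)] and ε = max_s |Ā(s)|. Then for every t ≥ 0, |E_{s_t∼π̃}[Ā(s_t)] − E_{s_t∼π}[Ā(s_t)]| ≤ 2ε(1 − (1−α)^t), where s_t∼π (resp. π̃) denotes the state distribution at time t when executing π (resp. π̃) from s₀∼ρ₀. -/

import Mathlib

open Finset

/-- State distribution at time `t` when executing policy `π`, starting from `ρ₀`. -/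
noncomputable def stateDist {S A : Type} [Fintype S] [Fintype A]
    (P : S → A → S → ℝ) (π : S → A → ℝ) (ρ₀ : S → ℝ) : ℕ → S → ℝ
  | 0 => ρ₀
  | (t+1) => fun s' => ∑ s, ∑ a, stateDist P π ρ₀ t s * π s a * P s a s'

/-- Unnormalized discounted state visitation frequency. -/
noncomputable def visit {S A : Type} [Fintype S] [Fintype A]
    (P : S → A → S → ℝ) (π : S → A → ℝ) (ρ₀ : S → ℝ) (γ : ℝ) (s : S) : ℝ :=
  ∑' t : ℕ, γ ^ t * stateDist P π ρ₀ t s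

/-- Coupled state-pair distribution at time `t`. -/
noncomputable def coup {S A : Type} [Fintype S] [Fintype A] [DecidableEq S] [DecidableEq A]
    (P : S → A → S → ℝ) (π πt : S → A → ℝ) (c : S → A → A → ℝ) (ρ₀ : S → ℝ) :
    ℕ → S → S → ℝ
  | 0 => fun s st => if s = st then ρ₀ s else 0
  | (t+1) => fun s' st' =>
      (∑ s, coup P π πt c ρ₀ t s s *
        ((if s' = st' then ∑ a, c s a a * P s a s' else 0) +
         ∑ a, ∑ at_, (if a ≠ at_ then c s a at_ * P s a s' * P s at_ st' else 0))) +
      ∑ s, ∑ st, (if s ≠ st then coup P π πt c ρ₀ t s st *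
        ((∑ a, π s a * P s a s') * (∑ at_, πt st at_ * P st at_ st')) else 0)

section lemmas
variable {S A : Type} [Fintype S] [Fintype A] [DecidableEq S] [DecidableEq A]
  (P : S → A → S → ℝ) (π πt : S → A → ℝ) (c : S → A → A → ℝ) (ρ₀ : S → ℝ)

lemma coup_nonneg (hPpos : ∀ s a s', 0 ≤ P s a s')
    (hρpos : ∀ s, 0 ≤ ρ₀ s)
    (hπpos : ∀ s a, 0 ≤ π s a) (hπtpos : ∀ s a, 0 ≤ πt s a)
    (hcpos : ∀ s a at_, 0 ≤ c s a at_) :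
    ∀ t s st, 0 ≤ coup P π πt c ρ₀ t s st := by
  intro t
  induction t with
  | zero =>
    intro s st; simp only [coup]; split <;> simp [hρpos]
  | succ t ih =>
    intro s' st'
    simp only [coup]
    apply add_nonneg
    · apply Finset.sum_nonneg; intro s _
      apply mul_nonneg (ih s s)
      apply add_nonneg
      · split
        · exact Finset.sum_nonneg fun a _ => mul_nonneg (hcpos _ _ _) (hPpos _ _ _)
        · exact le_refl 0
      · apply Finset.sum_nonneg; intro a _
        apply Finset.sum_nonneg; intro at_ _
        split
        · exact mul_nonneg (mul_nonneg (hcpos _ _ _) (hPpos _ _ _)) (hPpos _ _ _)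
        · exact le_refl 0
    · apply Finset.sum_nonneg; intro s _
      apply Finset.sum_nonneg; intro st _
      split
      · exact mul_nonneg (ih s st) (mul_nonneg
          (Finset.sum_nonneg fun a _ => mul_nonneg (hπpos _ _) (hPpos _ _ _))
          (Finset.sum_nonneg fun a _ => mul_nonneg (hπtpos _ _) (hPpos _ _ _)))
      · exact le_refl 0

lemma sum_ite_ne {β : Type} [Fintype β] [DecidableEq β] (g : β → ℝ) (a : β) :
    ∑ x, (if a ≠ x then g x else 0) = (∑ x, g x) - g a := by
  have h : ∑ x, g x = ∑ x, ((if a = x then g x else 0) + (if a ≠ x then g x else 0)) := by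
    apply Finset.sum_congr rfl; intro x _; by_cases h : a = x <;> simp [h]
  rw [Finset.sum_add_distrib, Finset.sum_ite_eq] at h
  simp only [Finset.mem_univ, if_true] at h
  linarith

lemma sum_ite_ne' {β : Type} [Fintype β] [DecidableEq β] (g : β → ℝ) (a : β) :
    ∑ x, (if x ≠ a then g x else 0) = (∑ x, g x) - g a := by
  have h : ∑ x, g x = ∑ x, ((if x = a then g x else 0) + (if x ≠ a then g x else 0)) := by
    apply Finset.sum_congr rfl; intro x _; by_cases h : x = a <;> simp [h]
  rw [Finset.sum_add_distrib, Finset.sum_ite_eq'] at h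
  simp only [Finset.mem_univ, if_true] at h
  linarith

lemma coup_marg1 (hPsum : ∀ s a, ∑ s', P s a s' = 1)
    (hπtsum : ∀ s, ∑ a, πt s a = 1)
    (hc1 : ∀ s a, ∑ at_, c s a at_ = π s a) :
    ∀ t s, ∑ st, coup P π πt c ρ₀ t s st = stateDist P π ρ₀ t s := by
  intro t
  induction t with
  | zero => intro s; simp [coup, stateDist, Finset.sum_ite_eq]
  | succ t ih =>
    intro s'
    simp only [coup, stateDist]
    rw [Finset.sum_add_distrib]
    have hA : ∑ st', ∑ s, coup P π πt c ρ₀ t s s *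
        ((if s' = st' then ∑ a, c s a a * P s a s' else 0) +
         ∑ a, ∑ at_, (if a ≠ at_ then c s a at_ * P s a s' * P s at_ st' else 0))
        = ∑ s, coup P π πt c ρ₀ t s s * ∑ a, π s a * P s a s' := by
      rw [Finset.sum_comm]
      apply Finset.sum_congr rfl; intro s _
      rw [← Finset.mul_sum]
      congr 1
      rw [Finset.sum_add_distrib, Finset.sum_ite_eq]
      simp only [Finset.mem_univ, if_true]
      have hY : ∑ st', ∑ a, ∑ at_, (if a ≠ at_ then c s a at_ * P s a s' * P s at_ st' else 0)
          = ∑ a, ∑ at_, (if a ≠ at_ then c s a at_ * P s a s' else 0) := by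
        rw [Finset.sum_comm]
        apply Finset.sum_congr rfl; intro a _
        rw [Finset.sum_comm]
        apply Finset.sum_congr rfl; intro at_ _
        by_cases h : a = at_
        · simp [h]
        · simp only [h, ne_eq, not_false_iff, if_true]
          rw [← Finset.mul_sum, hPsum, mul_one]
      rw [hY]
      have : ∀ a, ∑ at_, (if a ≠ at_ then c s a at_ * P s a s' else 0)
          = (π s a - c s a a) * P s a s' := by
        intro a
        have := sum_ite_ne (fun at_ => c s a at_ * P s a s') a
        rw [this, ← Finset.sum_mul, hc1]; ring
      rw [Finset.sum_congr rfl (fun a _ => this a), ← Finset.sum_add_distrib]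
      apply Finset.sum_congr rfl; intro a _
      ring
    have hB : ∑ st', ∑ s, ∑ st, (if s ≠ st then coup P π πt c ρ₀ t s st *
        ((∑ a, π s a * P s a s') * (∑ at_, πt st at_ * P st at_ st')) else 0)
        = ∑ s, ∑ st, (if s ≠ st then coup P π πt c ρ₀ t s st * ∑ a, π s a * P s a s' else 0) := by
      rw [Finset.sum_comm]
      apply Finset.sum_congr rfl; intro s _
      rw [Finset.sum_comm]
      apply Finset.sum_congr rfl; intro st _
      by_cases h : s = st
      · simp [h]
      · simp only [h, ne_eq, not_false_iff, if_true]
        have hg : ∑ st', ∑ at_, πt st at_ * P st at_ st' = 1 := by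
          rw [Finset.sum_comm]
          have : ∀ at_, ∑ st', πt st at_ * P st at_ st' = πt st at_ := by
            intro at_; rw [← Finset.mul_sum, hPsum, mul_one]
          rw [Finset.sum_congr rfl (fun a _ => this a), hπtsum]
        calc ∑ st', coup P π πt c ρ₀ t s st *
              ((∑ a, π s a * P s a s') * (∑ at_, πt st at_ * P st at_ st'))
            = coup P π πt c ρ₀ t s st * (∑ a, π s a * P s a s') *
              ∑ st', ∑ at_, πt st at_ * P st at_ st' := by
              rw [Finset.mul_sum]; apply Finset.sum_congr rfl; intro st' _; ring
          _ = coup P π πt c ρ₀ t s st * ∑ a, π s a * P s a s' := by rw [hg, mul_one]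
    rw [hA, hB]
    have : ∀ s, ∑ st, (if s ≠ st then coup P π πt c ρ₀ t s st * ∑ a, π s a * P s a s' else 0)
        = (∑ st, coup P π πt c ρ₀ t s st) * (∑ a, π s a * P s a s')
          - coup P π πt c ρ₀ t s s * ∑ a, π s a * P s a s' := by
      intro s
      have := sum_ite_ne (fun st => coup P π πt c ρ₀ t s st * ∑ a, π s a * P s a s') s
      rw [this, ← Finset.sum_mul]
    rw [Finset.sum_congr rfl (fun s _ => this s), ← Finset.sum_add_distrib]
    apply Finset.sum_congr rfl; intro s _
    rw [ih s, Finset.mul_sum]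
    have : stateDist P π ρ₀ t s * ∑ a, π s a * P s a s' = ∑ a, stateDist P π ρ₀ t s * (π s a * P s a s') := by
      rw [Finset.mul_sum]
    ring_nf
    rw [Finset.mul_sum]
    apply Finset.sum_congr rfl; intro a _; ring

lemma coup_marg2 (hPsum : ∀ s a, ∑ s', P s a s' = 1)
    (hπsum : ∀ s, ∑ a, π s a = 1)
    (hc2 : ∀ s at_, ∑ a, c s a at_ = πt s at_) :
    ∀ t st, ∑ s, coup P π πt c ρ₀ t s st = stateDist P πt ρ₀ t st := by
  intro t
  induction t with
  | zero =>
    intro st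
    simp only [coup, stateDist]
    have : ∀ s : S, (if s = st then ρ₀ s else 0) = (if s = st then ρ₀ st else 0) := by
      intro s; split <;> simp_all
    rw [Finset.sum_congr rfl (fun s _ => this s), Finset.sum_ite_eq']
    simp
  | succ t ih =>
    intro st'
    simp only [coup, stateDist]
    rw [Finset.sum_add_distrib]
    have hA : ∑ s', ∑ s, coup P π πt c ρ₀ t s s *
        ((if s' = st' then ∑ a, c s a a * P s a s' else 0) +
         ∑ a, ∑ at_, (if a ≠ at_ then c s a at_ * P s a s' * P s at_ st' else 0))
        = ∑ s, coup P π πt c ρ₀ t s s * ∑ at_, πt s at_ * P s at_ st' := by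
      rw [Finset.sum_comm]
      apply Finset.sum_congr rfl; intro s _
      rw [← Finset.mul_sum]
      congr 1
      rw [Finset.sum_add_distrib]
      have hD : ∑ s', (if s' = st' then ∑ a, c s a a * P s a s' else 0)
          = ∑ a, c s a a * P s a st' := by
        have : ∀ s' : S, (if s' = st' then ∑ a, c s a a * P s a s' else 0)
            = (if s' = st' then ∑ a, c s a a * P s a st' else 0) := by
          intro s'; split <;> simp_all
        rw [Finset.sum_congr rfl (fun s' _ => this s'), Finset.sum_ite_eq']
        simp
      have hY : ∑ s', ∑ a, ∑ at_, (if a ≠ at_ then c s a at_ * P s a s' * P s at_ st' else 0)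
          = ∑ a, ∑ at_, (if a ≠ at_ then c s a at_ * P s at_ st' else 0) := by
        rw [Finset.sum_comm]
        apply Finset.sum_congr rfl; intro a _
        rw [Finset.sum_comm]
        apply Finset.sum_congr rfl; intro at_ _
        by_cases h : a = at_
        · simp [h]
        · simp only [h, ne_eq, not_false_iff, if_true]
          have : ∀ s', c s a at_ * P s a s' * P s at_ st'
              = P s a s' * (c s a at_ * P s at_ st') := fun s' => by ring
          rw [Finset.sum_congr rfl (fun s' _ => this s'), ← Finset.sum_mul, hPsum, one_mul]
      rw [hD, hY]
      have hswap : ∑ a, ∑ at_, (if a ≠ at_ then c s a at_ * P s at_ st' else 0)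
          = ∑ at_, (πt s at_ - c s at_ at_) * P s at_ st' := by
        rw [Finset.sum_comm]
        apply Finset.sum_congr rfl; intro at_ _
        have := sum_ite_ne' (fun a => c s a at_ * P s at_ st') at_
        simp only [ne_eq] at this ⊢
        rw [this, ← Finset.sum_mul, hc2]; ring
      rw [hswap, ← Finset.sum_add_distrib]
      apply Finset.sum_congr rfl; intro at_ _
      ring
    have hB : ∑ s', ∑ s, ∑ st, (if s ≠ st then coup P π πt c ρ₀ t s st *
        ((∑ a, π s a * P s a s') * (∑ at_, πt st at_ * P st at_ st')) else 0)
        = ∑ s, ∑ st, (if s ≠ st then coup P π πt c ρ₀ t s st * ∑ at_, πt st at_ * P st at_ st' else 0) := by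
      rw [Finset.sum_comm]
      apply Finset.sum_congr rfl; intro s _
      rw [Finset.sum_comm]
      apply Finset.sum_congr rfl; intro st _
      by_cases h : s = st
      · simp [h]
      · simp only [h, ne_eq, not_false_iff, if_true]
        have hf : ∑ s', ∑ a, π s a * P s a s' = 1 := by
          rw [Finset.sum_comm]
          have : ∀ a, ∑ s', π s a * P s a s' = π s a := by
            intro a; rw [← Finset.mul_sum, hPsum, mul_one]
          rw [Finset.sum_congr rfl (fun a _ => this a), hπsum]
        calc ∑ s', coup P π πt c ρ₀ t s st *
              ((∑ a, π s a * P s a s') * (∑ at_, πt st at_ * P st at_ st'))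
            = coup P π πt c ρ₀ t s st * (∑ at_, πt st at_ * P st at_ st') *
              ∑ s', ∑ a, π s a * P s a s' := by
              rw [Finset.mul_sum]; apply Finset.sum_congr rfl; intro s' _; ring
          _ = coup P π πt c ρ₀ t s st * ∑ at_, πt st at_ * P st at_ st' := by rw [hf, mul_one]
    rw [hA, hB]
    have hoff : ∑ s, ∑ st, (if s ≠ st then coup P π πt c ρ₀ t s st * ∑ at_, πt st at_ * P st at_ st' else 0)
        = ∑ st, ((∑ s, coup P π πt c ρ₀ t s st) - coup P π πt c ρ₀ t st st) *
            (∑ at_, πt st at_ * P st at_ st') := by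
      rw [Finset.sum_comm]
      apply Finset.sum_congr rfl; intro st _
      have := sum_ite_ne' (fun s => coup P π πt c ρ₀ t s st * ∑ at_, πt st at_ * P st at_ st') st
      simp only [ne_eq] at this ⊢
      rw [this, ← Finset.sum_mul]; ring
    rw [hoff, ← Finset.sum_add_distrib]
    apply Finset.sum_congr rfl; intro st _
    rw [ih st, Finset.mul_sum, Finset.mul_sum, ← Finset.sum_add_distrib]
    apply Finset.sum_congr rfl; intro at_ _
    ring

lemma stateDist_sum (hPsum : ∀ s a, ∑ s', P s a s' = 1)
    (hπsum : ∀ s, ∑ a, π s a = 1) (hρsum : ∑ s, ρ₀ s = 1) :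
    ∀ t, ∑ s, stateDist P π ρ₀ t s = 1 := by
  intro t
  induction t with
  | zero => simpa [stateDist] using hρsum
  | succ t ih =>
    simp only [stateDist]
    rw [Finset.sum_comm]
    have h1 : ∀ s, ∑ s', ∑ a, stateDist P π ρ₀ t s * π s a * P s a s'
        = stateDist P π ρ₀ t s := by
      intro s
      rw [Finset.sum_comm]
      have : ∀ a, ∑ s', stateDist P π ρ₀ t s * π s a * P s a s'
          = stateDist P π ρ₀ t s * π s a := by
        intro a; rw [← Finset.mul_sum, hPsum, mul_one]
      rw [Finset.sum_congr rfl (fun a _ => this a), ← Finset.mul_sum, hπsum, mul_one]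
    rw [Finset.sum_congr rfl (fun s _ => h1 s), ih]

lemma coup_total (hPsum : ∀ s a, ∑ s', P s a s' = 1)
    (hπsum : ∀ s, ∑ a, π s a = 1) (hρsum : ∑ s, ρ₀ s = 1)
    (hπtsum : ∀ s, ∑ a, πt s a = 1)
    (hc1 : ∀ s a, ∑ at_, c s a at_ = π s a) :
    ∀ t, ∑ s, ∑ st, coup P π πt c ρ₀ t s st = 1 := by
  intro t
  rw [Finset.sum_congr rfl
    (fun s _ => coup_marg1 P π πt c ρ₀ hPsum hπtsum hc1 t s)]
  exact stateDist_sum P π ρ₀ hPsum hπsum hρsum t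

lemma coup_offdiag (α : ℝ) (hα0 : 0 ≤ α) (hα1 : α ≤ 1)
    (hPpos : ∀ s a s', 0 ≤ P s a s') (hPsum : ∀ s a, ∑ s', P s a s' = 1)
    (hρpos : ∀ s, 0 ≤ ρ₀ s) (hρsum : ∑ s, ρ₀ s = 1)
    (hπpos : ∀ s a, 0 ≤ π s a) (hπsum : ∀ s, ∑ a, π s a = 1)
    (hπtpos : ∀ s a, 0 ≤ πt s a) (hπtsum : ∀ s, ∑ a, πt s a = 1)
    (hcpos : ∀ s a at_, 0 ≤ c s a at_)
    (hc1 : ∀ s a, ∑ at_, c s a at_ = π s a)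
    (hcdis : ∀ s, ∑ a, ∑ at_, (if a ≠ at_ then c s a at_ else 0) ≤ α) :
    ∀ t, ∑ s, ∑ st, (if s ≠ st then coup P π πt c ρ₀ t s st else 0)
      ≤ 1 - (1 - α) ^ t := by
  have hnn := coup_nonneg P π πt c ρ₀ hPpos hρpos hπpos hπtpos hcpos
  intro t
  induction t with
  | zero =>
    simp only [coup, pow_zero, sub_self]
    apply le_of_eq
    apply Finset.sum_eq_zero; intro s _
    apply Finset.sum_eq_zero; intro st _
    by_cases h : s = st <;> simp [h]
  | succ t ih =>
    set q := ∑ s, ∑ st, (if s ≠ st then coup P π πt c ρ₀ t s st else 0) with hq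
    have hdiag : ∑ s, coup P π πt c ρ₀ t s s = 1 - q := by
      have htot := coup_total P π πt c ρ₀ hPsum hπsum hρsum hπtsum hc1 t
      have : ∀ s, ∑ st, coup P π πt c ρ₀ t s st
          = coup P π πt c ρ₀ t s s + ∑ st, (if s ≠ st then coup P π πt c ρ₀ t s st else 0) := by
        intro s
        have := sum_ite_ne (fun st => coup P π πt c ρ₀ t s st) s
        simp only [ne_eq] at this
        rw [this]; ring
      rw [Finset.sum_congr rfl (fun s _ => this s), Finset.sum_add_distrib] at htot
      rw [hq]; linarith
    have hqnn : 0 ≤ q := by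
      apply Finset.sum_nonneg; intro s _
      apply Finset.sum_nonneg; intro st _
      split
      · exact hnn t s st
      · exact le_refl 0
    -- bound the new off-diagonal mass
    have hkey : ∑ s', ∑ st', (if s' ≠ st' then coup P π πt c ρ₀ (t+1) s' st' else 0)
        ≤ ∑ s', ∑ st',
          ((∑ s, coup P π πt c ρ₀ t s s *
            ∑ a, ∑ at_, (if a ≠ at_ then c s a at_ * P s a s' * P s at_ st' else 0)) +
           ∑ s, ∑ st, (if s ≠ st then coup P π πt c ρ₀ t s st *
            ((∑ a, π s a * P s a s') * (∑ at_, πt st at_ * P st at_ st')) else 0)) := by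
      apply Finset.sum_le_sum; intro s' _
      apply Finset.sum_le_sum; intro st' _
      have hZnn : 0 ≤ (∑ s, coup P π πt c ρ₀ t s s *
            ∑ a, ∑ at_, (if a ≠ at_ then c s a at_ * P s a s' * P s at_ st' else 0)) +
           ∑ s, ∑ st, (if s ≠ st then coup P π πt c ρ₀ t s st *
            ((∑ a, π s a * P s a s') * (∑ at_, πt st at_ * P st at_ st')) else 0) := by
        apply add_nonneg
        · apply Finset.sum_nonneg; intro s _
          apply mul_nonneg (hnn t s s)
          apply Finset.sum_nonneg; intro a _
          apply Finset.sum_nonneg; intro at_ _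
          split
          · exact mul_nonneg (mul_nonneg (hcpos _ _ _) (hPpos _ _ _)) (hPpos _ _ _)
          · exact le_refl 0
        · apply Finset.sum_nonneg; intro s _
          apply Finset.sum_nonneg; intro st _
          split
          · exact mul_nonneg (hnn t s st) (mul_nonneg
              (Finset.sum_nonneg fun a _ => mul_nonneg (hπpos _ _) (hPpos _ _ _))
              (Finset.sum_nonneg fun a _ => mul_nonneg (hπtpos _ _) (hPpos _ _ _)))
          · exact le_refl 0
      by_cases h : s' = st'
      · rw [if_neg (by simp [h])]
        exact hZnn
      · simp only [h, ne_eq, not_false_iff, if_true, coup]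
        apply add_le_add_left
        apply Finset.sum_le_sum; intro s _
        apply le_of_eq
        congr 1
        simp [h]
    -- compute / bound the RHS of hkey
    simp only [Finset.sum_add_distrib] at hkey
    have hS1 : ∑ s', ∑ st', ∑ s, coup P π πt c ρ₀ t s s *
          ∑ a, ∑ at_, (if a ≠ at_ then c s a at_ * P s a s' * P s at_ st' else 0)
        ≤ α * (1 - q) := by
      have hY2 : ∀ s, ∑ s', ∑ st', ∑ a, ∑ at_,
            (if a ≠ at_ then c s a at_ * P s a s' * P s at_ st' else 0)
          = ∑ a, ∑ at_, (if a ≠ at_ then c s a at_ else 0) := by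
        intro s
        have h1 : ∀ s' : S, ∑ st', ∑ a, ∑ at_,
              (if a ≠ at_ then c s a at_ * P s a s' * P s at_ st' else 0)
            = ∑ a, ∑ at_, (if a ≠ at_ then c s a at_ * P s a s' else 0) := by
          intro s'
          rw [Finset.sum_comm]
          apply Finset.sum_congr rfl; intro a _
          rw [Finset.sum_comm]
          apply Finset.sum_congr rfl; intro at_ _
          by_cases h : a = at_
          · simp [h]
          · simp only [h, ne_eq, not_false_iff, if_true]
            rw [← Finset.mul_sum, hPsum, mul_one]
        rw [Finset.sum_congr rfl (fun s' _ => h1 s'), Finset.sum_comm]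
        apply Finset.sum_congr rfl; intro a _
        rw [Finset.sum_comm]
        apply Finset.sum_congr rfl; intro at_ _
        by_cases h : a = at_
        · simp [h]
        · simp only [h, ne_eq, not_false_iff, if_true]
          rw [← Finset.mul_sum, hPsum, mul_one]
      have e1 : ∀ s' : S, ∑ st', ∑ s, coup P π πt c ρ₀ t s s *
            ∑ a, ∑ at_, (if a ≠ at_ then c s a at_ * P s a s' * P s at_ st' else 0)
          = ∑ s, ∑ st', coup P π πt c ρ₀ t s s *
            ∑ a, ∑ at_, (if a ≠ at_ then c s a at_ * P s a s' * P s at_ st' else 0) :=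
        fun s' => Finset.sum_comm
      rw [Finset.sum_congr rfl (fun s' _ => e1 s'), Finset.sum_comm]
      have e2 : ∀ s, ∑ s', ∑ st', coup P π πt c ρ₀ t s s *
            ∑ a, ∑ at_, (if a ≠ at_ then c s a at_ * P s a s' * P s at_ st' else 0)
          = coup P π πt c ρ₀ t s s * ∑ a, ∑ at_, (if a ≠ at_ then c s a at_ else 0) := by
        intro s
        rw [← hY2 s, Finset.mul_sum]
        apply Finset.sum_congr rfl; intro s' _
        rw [Finset.mul_sum]
      rw [Finset.sum_congr rfl (fun s _ => e2 s)]
      calc ∑ s, coup P π πt c ρ₀ t s s * ∑ a, ∑ at_, (if a ≠ at_ then c s a at_ else 0)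
          ≤ ∑ s, coup P π πt c ρ₀ t s s * α := by
            apply Finset.sum_le_sum; intro s _
            exact mul_le_mul_of_nonneg_left (hcdis s) (hnn t s s)
        _ = α * (1 - q) := by rw [← Finset.sum_mul, hdiag]; ring
    have hS2 : ∑ s', ∑ st', ∑ s, ∑ st, (if s ≠ st then coup P π πt c ρ₀ t s st *
          ((∑ a, π s a * P s a s') * (∑ at_, πt st at_ * P st at_ st')) else 0)
        = q := by
      have hfsum : ∀ s : S, ∑ s', ∑ a, π s a * P s a s' = 1 := by
        intro s
        rw [Finset.sum_comm]
        have : ∀ a, ∑ s', π s a * P s a s' = π s a := by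
          intro a; rw [← Finset.mul_sum, hPsum, mul_one]
        rw [Finset.sum_congr rfl (fun a _ => this a), hπsum]
      have hgsum : ∀ st : S, ∑ st', ∑ at_, πt st at_ * P st at_ st' = 1 := by
        intro st
        rw [Finset.sum_comm]
        have : ∀ a, ∑ st', πt st a * P st a st' = πt st a := by
          intro a; rw [← Finset.mul_sum, hPsum, mul_one]
        rw [Finset.sum_congr rfl (fun a _ => this a), hπtsum]
      have e1 : ∀ s' : S, ∑ st', ∑ s, ∑ st, (if s ≠ st then coup P π πt c ρ₀ t s st *
            ((∑ a, π s a * P s a s') * (∑ at_, πt st at_ * P st at_ st')) else 0)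
          = ∑ s, ∑ st, (if s ≠ st then coup P π πt c ρ₀ t s st *
            (∑ a, π s a * P s a s') else 0) := by
        intro s'
        rw [Finset.sum_comm]
        apply Finset.sum_congr rfl; intro s _
        rw [Finset.sum_comm]
        apply Finset.sum_congr rfl; intro st _
        by_cases h : s = st
        · simp [h]
        · simp only [h, ne_eq, not_false_iff, if_true]
          calc ∑ st', coup P π πt c ρ₀ t s st *
                ((∑ a, π s a * P s a s') * (∑ at_, πt st at_ * P st at_ st'))
              = coup P π πt c ρ₀ t s st * (∑ a, π s a * P s a s') *
                ∑ st', ∑ at_, πt st at_ * P st at_ st' := by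
                rw [Finset.mul_sum]; apply Finset.sum_congr rfl; intro st' _; ring
            _ = coup P π πt c ρ₀ t s st * (∑ a, π s a * P s a s') := by
                rw [hgsum, mul_one]
      rw [Finset.sum_congr rfl (fun s' _ => e1 s'), Finset.sum_comm]
      apply Finset.sum_congr rfl; intro s _
      rw [Finset.sum_comm]
      apply Finset.sum_congr rfl; intro st _
      by_cases h : s = st
      · simp [h]
      · simp only [h, ne_eq, not_false_iff, if_true]
        calc ∑ s', coup P π πt c ρ₀ t s st * (∑ a, π s a * P s a s')
            = coup P π πt c ρ₀ t s st * ∑ s', ∑ a, π s a * P s a s' := by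
              rw [Finset.mul_sum]
          _ = coup P π πt c ρ₀ t s st := by rw [hfsum, mul_one]
    have hmul : (1 - α) * q ≤ (1 - α) * (1 - (1 - α) ^ t) :=
      mul_le_mul_of_nonneg_left ih (by linarith)
    rw [pow_succ]
    nlinarith [hkey, hS1, hS2]

end lemmas

/-- Coupling lemma: per-timestep bound on state-distribution mismatch of expected
advantage for an α-coupled policy pair. -/
theorem stmt_4 {S A : Type} [Fintype S] [Fintype A] [Nonempty S] [DecidableEq A]
    (P : S → A → S → ℝ) (r : S → ℝ) (ρ₀ : S → ℝ) (γ : ℝ) (α : ℝ)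
    (π πt : S → A → ℝ) (c : S → A → A → ℝ) (V : S → ℝ) (Q Aπ : S → A → ℝ)
    (hγ0 : 0 < γ) (hγ1 : γ < 1) (hα0 : 0 ≤ α) (hα1 : α ≤ 1)
    (hPpos : ∀ s a s', 0 ≤ P s a s') (hPsum : ∀ s a, ∑ s', P s a s' = 1)
    (hρpos : ∀ s, 0 ≤ ρ₀ s) (hρsum : ∑ s, ρ₀ s = 1)
    (hπpos : ∀ s a, 0 ≤ π s a) (hπsum : ∀ s, ∑ a, π s a = 1)
    (hπtpos : ∀ s a, 0 ≤ πt s a) (hπtsum : ∀ s, ∑ a, πt s a = 1)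
    -- (π, πt) is an α-coupled policy pair, with joint distribution c s over (a, ã):
    (hcpos : ∀ s a at_, 0 ≤ c s a at_)
    (hc1 : ∀ s a, ∑ at_, c s a at_ = π s a)
    (hc2 : ∀ s at_, ∑ a, c s a at_ = πt s at_)
    (hcdis : ∀ s, ∑ a, ∑ at_, (if a ≠ at_ then c s a at_ else 0) ≤ α)
    (hV : ∀ s, V s = ∑ a, π s a * (r s + γ * ∑ s', P s a s' * V s'))
    (hQ : ∀ s a, Q s a = r s + γ * ∑ s', P s a s' * V s')
    (hA : ∀ s a, Aπ s a = Q s a - V s)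
    (Abar : S → ℝ) (hAbar : ∀ s, Abar s = ∑ a, πt s a * Aπ s a)
    (ε : ℝ) (hε : IsGreatest (Set.range fun s => |Abar s|) ε) :
    ∀ t : ℕ,
      |(∑ s, stateDist P πt ρ₀ t s * Abar s) - ∑ s, stateDist P π ρ₀ t s * Abar s|
        ≤ 2 * ε * (1 - (1 - α) ^ t) := by
  letI : DecidableEq S := Classical.decEq S
  intro t
  have m1 := coup_marg1 P π πt c ρ₀ hPsum hπtsum hc1 t
  have m2 := coup_marg2 P π πt c ρ₀ hPsum hπsum hc2 t
  have hnn := coup_nonneg P π πt c ρ₀ hPpos hρpos hπpos hπtpos hcpos t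
  have hqle := coup_offdiag P π πt c ρ₀ α hα0 hα1 hPpos hPsum hρpos hρsum hπpos hπsum
    hπtpos hπtsum hcpos hc1 hcdis t
  have hε0 : 0 ≤ ε := by
    obtain ⟨s0, hs0⟩ := hε.1
    rw [← hs0]; exact abs_nonneg _
  have hub : ∀ s, |Abar s| ≤ ε := fun s => hε.2 ⟨s, rfl⟩
  have hdiff : (∑ s, stateDist P πt ρ₀ t s * Abar s) - ∑ s, stateDist P π ρ₀ t s * Abar s
      = ∑ s, ∑ st, (if s ≠ st then coup P π πt c ρ₀ t s st * (Abar st - Abar s) else 0) := by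
    have e1 : ∑ st, stateDist P πt ρ₀ t st * Abar st
        = ∑ s, ∑ st, coup P π πt c ρ₀ t s st * Abar st := by
      rw [Finset.sum_comm]
      apply Finset.sum_congr rfl; intro st _
      rw [← m2 st, Finset.sum_mul]
    have e2 : ∑ s, stateDist P π ρ₀ t s * Abar s
        = ∑ s, ∑ st, coup P π πt c ρ₀ t s st * Abar s := by
      apply Finset.sum_congr rfl; intro s _
      rw [← m1 s, Finset.sum_mul]
    rw [e1, e2, ← Finset.sum_sub_distrib]
    apply Finset.sum_congr rfl; intro s _
    rw [← Finset.sum_sub_distrib]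
    apply Finset.sum_congr rfl; intro st _
    by_cases h : s = st
    · simp [h]
    · simp only [h, ne_eq, not_false_iff, if_true]; ring
  rw [hdiff]
  have habs : |∑ s, ∑ st, (if s ≠ st then coup P π πt c ρ₀ t s st * (Abar st - Abar s) else 0)|
      ≤ ∑ s, ∑ st, (if s ≠ st then coup P π πt c ρ₀ t s st * (2 * ε) else 0) := by
    calc |∑ s, ∑ st, (if s ≠ st then coup P π πt c ρ₀ t s st * (Abar st - Abar s) else 0)|
        ≤ ∑ s, |∑ st, (if s ≠ st then coup P π πt c ρ₀ t s st * (Abar st - Abar s) else 0)| :=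
          Finset.abs_sum_le_sum_abs _ _
      _ ≤ ∑ s, ∑ st, |(if s ≠ st then coup P π πt c ρ₀ t s st * (Abar st - Abar s) else 0)| :=
          Finset.sum_le_sum fun s _ => Finset.abs_sum_le_sum_abs _ _
      _ ≤ ∑ s, ∑ st, (if s ≠ st then coup P π πt c ρ₀ t s st * (2 * ε) else 0) := by
          apply Finset.sum_le_sum; intro s _
          apply Finset.sum_le_sum; intro st _
          by_cases h : s = st
          · simp [h]
          · simp only [h, ne_eq, not_false_iff, if_true]
            rw [abs_mul, abs_of_nonneg (hnn s st)]
            apply mul_le_mul_of_nonneg_left _ (hnn s st)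
            calc |Abar st - Abar s| ≤ |Abar st| + |Abar s| := abs_sub _ _
              _ ≤ ε + ε := add_le_add (hub st) (hub s)
              _ = 2 * ε := by ring
  have hfact : ∑ s, ∑ st, (if s ≠ st then coup P π πt c ρ₀ t s st * (2 * ε) else 0)
      = (∑ s, ∑ st, (if s ≠ st then coup P π πt c ρ₀ t s st else 0)) * (2 * ε) := by
    rw [Finset.sum_mul]
    apply Finset.sum_congr rfl; intro s _
    rw [Finset.sum_mul]
    apply Finset.sum_congr rfl; intro st _
    split <;> simp
  calc |∑ s, ∑ st, (if s ≠ st then coup P π πt c ρ₀ t s st * (Abar st - Abar s) else 0)|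
      ≤ ∑ s, ∑ st, (if s ≠ st then coup P π πt c ρ₀ t s st * (2 * ε) else 0) := habs
    _ = (∑ s, ∑ st, (if s ≠ st then coup P π πt c ρ₀ t s st else 0)) * (2 * ε) := hfact
    _ ≤ (1 - (1 - α) ^ t) * (2 * ε) := by
        apply mul_le_mul_of_nonneg_right hqle (by linarith)
    _ = 2 * ε * (1 - (1 - α) ^ t) := by ring
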